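/- Let {(X_n, M_n, ∗)}_{n∈ℕ} be a sequence of nonempty compact non-Archimedean fuzzy metric spaces satisfying: (1) the continuous t-norm ∗ satisfies property (TN1): a − a∗b ≥ a∗(1−b) for all a,b ∈ [0,1], and each (M_n, ∗) is stationary, i.e., M_n(x,y,t) does not depend on t > 0; (2) there exists a constant C > 0 with C ≤ diam(X_n) for all n, where diam(X_n) = inf{ M_n(x,y) : x,y ∈ X_n }; (3) for every 0 < ε < 1 there exists N(ε) ∈ ℕ with cov(X_n, ε) ≤ N(ε) for all n. Then for every 0 < ε < 1 there exists a subsequence {X_{n_k}} such that M_GH(X_{n_j}, X_{n_k}) > (1−ε) ∗ (1−ε) for all j,k ∈ ℕ; consequently the sequence has a Cauchy subsequence with respect to M_GH. -/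

import Mathlib

open Set

/-- A continuous t-norm on `[0,1]`. -/
structure IsContinuousTNorm (star : ℝ → ℝ → ℝ) : Prop where
  mem : ∀ a ∈ Icc (0:ℝ) 1, ∀ b ∈ Icc (0:ℝ) 1, star a b ∈ Icc (0:ℝ) 1
  comm : ∀ a ∈ Icc (0:ℝ) 1, ∀ b ∈ Icc (0:ℝ) 1, star a b = star b a
  assoc : ∀ a ∈ Icc (0:ℝ) 1, ∀ b ∈ Icc (0:ℝ) 1, ∀ c ∈ Icc (0:ℝ) 1,
    star (star a b) c = star a (star b c)
  one : ∀ a ∈ Icc (0:ℝ) 1, star a 1 = a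
  mono : ∀ a b c d : ℝ, a ∈ Icc (0:ℝ) 1 → b ∈ Icc (0:ℝ) 1 → c ∈ Icc (0:ℝ) 1 →
    d ∈ Icc (0:ℝ) 1 → a ≤ c → b ≤ d → star a b ≤ star c d
  continuous : ContinuousOn (fun p : ℝ × ℝ => star p.1 p.2) (Icc 0 1 ×ˢ Icc 0 1)

/-- A fuzzy metric in the sense of Kramosil and Michalek: `M x y t` is the degree of
nearness of `x` and `y` at time `t ≥ 0`. -/
structure IsFuzzyMetric {X : Type*} (star : ℝ → ℝ → ℝ) (M : X → X → ℝ → ℝ) : Prop where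
  range : ∀ x y t, 0 ≤ t → M x y t ∈ Icc (0:ℝ) 1
  km1 : ∀ x y, M x y 0 = 0
  km2 : ∀ x y, (∀ t, 0 < t → M x y t = 1) ↔ x = y
  km3 : ∀ x y t, M x y t = M y x t
  km4 : ∀ x y z t s, 0 < t → 0 < s → star (M x y t) (M y z s) ≤ M x z (t + s)
  km5 : ∀ x y t, 0 < t → ContinuousWithinAt (M x y) (Iio t) t

/-- A non-Archimedean fuzzy metric: (KM4) is replaced by the stronger (NA). -/
structure IsNAFuzzyMetric {X : Type*} (star : ℝ → ℝ → ℝ) (M : X → X → ℝ → ℝ) : Prop where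
  range : ∀ x y t, 0 ≤ t → M x y t ∈ Icc (0:ℝ) 1
  km1 : ∀ x y, M x y 0 = 0
  km2 : ∀ x y, (∀ t, 0 < t → M x y t = 1) ↔ x = y
  km3 : ∀ x y t, M x y t = M y x t
  na : ∀ x y z t s, 0 < t → 0 < s → star (M x y t) (M y z s) ≤ M x z (max t s)
  km5 : ∀ x y t, 0 < t → ContinuousWithinAt (M x y) (Iio t) t

/-- The open ball `B_M(x, ε, t)`. -/
def fuzzyBall {X : Type*} (M : X → X → ℝ → ℝ) (x : X) (ε t : ℝ) : Set X :=
  {y | 1 - ε < M x y t}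

/-- The topology on `X` is the one induced by the fuzzy metric `M`, i.e. the open balls
form a neighbourhood basis at every point. -/
def FuzzyCompatible {X : Type*} [TopologicalSpace X] (M : X → X → ℝ → ℝ) : Prop :=
  ∀ x : X, (nhds x).HasBasis (fun p : ℝ × ℝ => 0 < p.1 ∧ p.1 < 1 ∧ 0 < p.2)
    (fun p => fuzzyBall M x p.1 p.2)

/-- The Hausdorff fuzzy distance between two subsets of a fuzzy metric space. -/
noncomputable def fuzzyHSet {X : Type*} (M : X → X → ℝ → ℝ) (A B : Set X) (t : ℝ) : ℝ :=
  min (⨅ a : A, ⨆ b : B, M a b t) (⨅ b : B, ⨆ a : A, M a b t)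

/-- The Hausdorff fuzzy distance between the two parts of a disjoint union `X ⊕ Y`. -/
noncomputable def fuzzyH {X Y : Type*} (M : (X ⊕ Y) → (X ⊕ Y) → ℝ → ℝ) (t : ℝ) : ℝ :=
  min (⨅ x : X, ⨆ y : Y, M (Sum.inl x) (Sum.inr y) t)
    (⨅ y : Y, ⨆ x : X, M (Sum.inl x) (Sum.inr y) t)

/-- A non-Archimedean fuzzy metric on the disjoint union `X ⊕ Y` is admissible if it
restricts to the given fuzzy metrics on `X` and on `Y`. -/
def IsAdmissible {X Y : Type*} (star : ℝ → ℝ → ℝ) (MX : X → X → ℝ → ℝ)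
    (MY : Y → Y → ℝ → ℝ) (M : (X ⊕ Y) → (X ⊕ Y) → ℝ → ℝ) : Prop :=
  IsNAFuzzyMetric star M ∧
    (∀ x x' t, 0 ≤ t → M (Sum.inl x) (Sum.inl x') t = MX x x' t) ∧
    (∀ y y' t, 0 ≤ t → M (Sum.inr y) (Sum.inr y') t = MY y y' t)

/-- The non-Archimedean Gromov-Hausdorff fuzzy distance. -/
noncomputable def MGH {X Y : Type*} (star : ℝ → ℝ → ℝ) (MX : X → X → ℝ → ℝ)
    (MY : Y → Y → ℝ → ℝ) (t : ℝ) : ℝ :=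
  sSup ((fun M => fuzzyH M t) '' {M | IsAdmissible star MX MY M})

/-- The `t`-diameter of a fuzzy metric space. -/
noncomputable def fuzzyDiam {X : Type*} (M : X → X → ℝ → ℝ) (s : ℝ) : ℝ :=
  ⨅ p : X × X, M p.1 p.2 s

/-- `cov(X, ε, t) ≤ N` : `X` can be covered by at most `N` balls `B(c, ε, t)`. -/
def CovLE {X : Type*} (M : X → X → ℝ → ℝ) (ε t : ℝ) (N : ℕ) : Prop :=
  ∃ C : Finset X, C.card ≤ N ∧ ∀ x : X, ∃ c ∈ C, 1 - ε < M c x t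

/-- Property (TN1) of a t-norm: `a - a ∗ b ≥ a ∗ (1 - b)`. -/
def TN1 (star : ℝ → ℝ → ℝ) : Prop :=
  ∀ a ∈ Icc (0:ℝ) 1, ∀ b ∈ Icc (0:ℝ) 1, star a (1 - b) ≤ a - star a b

/-- The standard fuzzy metric associated to a metric space. -/
noncomputable def stdFuzzy {X : Type*} [MetricSpace X] (x y : X) (t : ℝ) : ℝ :=
  if 0 < t then t / (t + dist x y) else 0

universe u
section TNormBasics

variable {star : ℝ → ℝ → ℝ} (hstar : IsContinuousTNorm star)

lemma one_mem01 : (1:ℝ) ∈ Icc (0:ℝ) 1 := ⟨zero_le_one, le_refl 1⟩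

lemma zero_mem01 : (0:ℝ) ∈ Icc (0:ℝ) 1 := ⟨le_refl 0, zero_le_one⟩

include hstar

lemma star_le_left {a b : ℝ} (ha : a ∈ Icc (0:ℝ) 1) (hb : b ∈ Icc (0:ℝ) 1) :
    star a b ≤ a := by
  have := hstar.mono a b a 1 ha hb ha one_mem01 (le_refl a) hb.2
  rwa [hstar.one a ha] at this

lemma star_le_right {a b : ℝ} (ha : a ∈ Icc (0:ℝ) 1) (hb : b ∈ Icc (0:ℝ) 1) :
    star a b ≤ b := by
  rw [hstar.comm a ha b hb]; exact star_le_left hstar hb ha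

lemma star_one_left {a : ℝ} (ha : a ∈ Icc (0:ℝ) 1) : star 1 a = a := by
  rw [hstar.comm 1 one_mem01 a ha]; exact hstar.one a ha

/-- Reordering of a fourfold product. -/
lemma star_rearr {a b c d : ℝ} (ha : a ∈ Icc (0:ℝ) 1) (hb : b ∈ Icc (0:ℝ) 1)
    (hc : c ∈ Icc (0:ℝ) 1) (hd : d ∈ Icc (0:ℝ) 1) :
    star (star a b) (star c d) = star (star a c) (star b d) := by
  have hcd := hstar.mem c hc d hd
  have hbc := hstar.mem b hb c hc
  have hcb := hstar.mem c hc b hb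
  have hbd := hstar.mem b hb d hd
  rw [hstar.assoc a ha b hb (star c d) hcd,
    ← hstar.assoc b hb c hc d hd,
    hstar.comm b hb c hc,
    hstar.assoc c hc b hb d hd,
    ← hstar.assoc a ha c hc (star b d) hbd,
    ← hstar.assoc (star a c) (hstar.mem a ha c hc) b hb d hd]

end TNormBasics
section NoIdem

variable {star : ℝ → ℝ → ℝ} (hstar : IsContinuousTNorm star)

include hstar

/-- A continuous t-norm satisfying (TN1) has no interior idempotents; in particular
`γ ∗ s < s` whenever `γ < 1` and `s > 0`. -/
lemma star_lt_of_tn1 (htn1 : TN1 star) {γ s : ℝ} (hγ : γ ∈ Icc (0:ℝ) 1) (hγ1 : γ < 1)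
    (hs : s ∈ Icc (0:ℝ) 1) (hs0 : 0 < s) : star γ s < s := by
  rcases lt_or_eq_of_le (star_le_right hstar hγ hs) with h | h
  · exact h
  exfalso
  -- iterates of `γ`
  set g : ℕ → ℝ := fun n => Nat.rec γ (fun _ p => star γ p) n with hg
  have hg0 : g 0 = γ := rfl
  have hgs : ∀ n, g (n+1) = star γ (g n) := fun n => rfl
  have hgmem : ∀ n, g n ∈ Icc (0:ℝ) 1 := by
    intro n; induction n with
    | zero => exact hγ
    | succ n ih => rw [hgs]; exact hstar.mem γ hγ _ ih
  have hfix : ∀ n, star (g n) s = s := by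
    intro n; induction n with
    | zero => exact h
    | succ n ih =>
      rw [hgs, hstar.assoc γ hγ (g n) (hgmem n) s hs, ih, h]
  have hanti : ∀ n, g (n+1) ≤ g n := fun n => by
    rw [hgs]; exact star_le_right hstar hγ (hgmem n)
  have hanti' : Antitone g := antitone_nat_of_succ_le hanti
  have hsle : ∀ n, s ≤ g n := by
    intro n
    calc s = star (g n) s := (hfix n).symm
    _ ≤ g n := star_le_left hstar (hgmem n) hs
  -- the limit is an idempotent
  have hbdd : BddBelow (Set.range g) := ⟨0, by rintro _ ⟨n, rfl⟩; exact (hgmem n).1⟩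
  obtain ⟨e, he⟩ : ∃ e, Filter.Tendsto g Filter.atTop (nhds e) :=
    ⟨_, tendsto_atTop_ciInf hanti' hbdd⟩
  have hemem : e ∈ Icc (0:ℝ) 1 :=
    isClosed_Icc.mem_of_tendsto he (Filter.Eventually.of_forall hgmem)
  have hse : s ≤ e := le_of_tendsto_of_tendsto' tendsto_const_nhds he hsle
  have heγ : e ≤ γ := by
    have : ∀ n, g n ≤ γ := fun n => by
      calc g n ≤ g 0 := hanti' (Nat.zero_le n)
      _ = γ := rfl
    exact le_of_tendsto_of_tendsto' he tendsto_const_nhds this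
  -- continuity transfers the limits
  have hsq : IsCompact ((Icc (0:ℝ) 1) ×ˢ (Icc (0:ℝ) 1)) := isCompact_Icc.prod isCompact_Icc
  have hcont := hstar.continuous
  have hkey : ∀ (u : ℕ → ℝ) (l : ℝ), (∀ n, u n ∈ Icc (0:ℝ) 1) → l ∈ Icc (0:ℝ) 1 →
      Filter.Tendsto u Filter.atTop (nhds l) →
      ∀ (v : ℕ → ℝ) (m : ℝ), (∀ n, v n ∈ Icc (0:ℝ) 1) → m ∈ Icc (0:ℝ) 1 →
      Filter.Tendsto v Filter.atTop (nhds m) →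
      Filter.Tendsto (fun n => star (u n) (v n)) Filter.atTop (nhds (star l m)) := by
    intro u l hu hl htu v m hv hm htv
    have hcw : ContinuousWithinAt (fun p : ℝ × ℝ => star p.1 p.2)
        ((Icc (0:ℝ) 1) ×ˢ (Icc (0:ℝ) 1)) (l, m) := hcont _ ⟨hl, hm⟩
    have htp : Filter.Tendsto (fun n => ((u n, v n) : ℝ × ℝ)) Filter.atTop
        (nhdsWithin (l, m) ((Icc (0:ℝ) 1) ×ˢ (Icc (0:ℝ) 1))) := by
      apply tendsto_nhdsWithin_of_tendsto_nhds_of_eventually_within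
      · exact htu.prodMk_nhds htv
      · exact Filter.Eventually.of_forall fun n => ⟨hu n, hv n⟩
    exact hcw.tendsto.comp htp
  have hes : star e s = s := by
    have h1 := hkey g e hgmem hemem he (fun _ => s) s (fun _ => hs) hs tendsto_const_nhds
    have h2 : Filter.Tendsto (fun n => star (g n) s) Filter.atTop (nhds s) := by
      simpa [hfix] using (tendsto_const_nhds : Filter.Tendsto (fun _ : ℕ => s) _ _)
    exact tendsto_nhds_unique h1 h2
  have hee : star e e = e := by
    have hmul : ∀ n m, star (g n) (g m) = g (n + m + 1) := by
      intro n m; induction n with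
      | zero => simp [hg0, ← hgs]
      | succ n ih =>
        rw [hgs, hstar.comm (star γ (g n)) (hstar.mem γ hγ _ (hgmem n)) (g m) (hgmem m),
          ← hstar.assoc (g m) (hgmem m) γ hγ (g n) (hgmem n),
          hstar.comm (g m) (hgmem m) γ hγ,
          hstar.assoc γ hγ (g m) (hgmem m) (g n) (hgmem n),
          hstar.comm (g m) (hgmem m) (g n) (hgmem n), ih]
        rw [show n + 1 + m + 1 = (n + m + 1) + 1 from by omega, hgs]
    have h1 := hkey g e hgmem hemem he g e hgmem hemem he
    have h2 : Filter.Tendsto (fun n => star (g n) (g n)) Filter.atTop (nhds e) := by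
      have : (fun n => star (g n) (g n)) = fun n => g (n + n + 1) := by
        funext n; exact hmul n n
      rw [this]
      have hnn : Filter.Tendsto (fun n : ℕ => n + n + 1) Filter.atTop Filter.atTop :=
        Filter.tendsto_atTop_mono (fun n : ℕ => by omega : ∀ n : ℕ, n ≤ n + n + 1)
          Filter.tendsto_id
      exact he.comp hnn
    exact tendsto_nhds_unique h1 h2
  have he0 : 0 < e := lt_of_lt_of_le hs0 hse
  have he1 : e < 1 := lt_of_le_of_lt heγ hγ1
  have h1e : (1 - e) ∈ Icc (0:ℝ) 1 := ⟨by linarith [hemem.2], by linarith [hemem.1]⟩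
  have htneq := htn1 e hemem e hemem
  rw [hee, sub_self] at htneq
  -- `star e (1-e) ≤ 0`; derive a contradiction in both cases
  rcases le_or_gt e (1 - e) with hcase | hcase
  · have : e ≤ star e (1 - e) := by
      calc e = star e e := hee.symm
      _ ≤ star e (1 - e) := hstar.mono e e e (1-e) hemem hemem hemem h1e (le_refl e) hcase
    linarith
  · -- use the intermediate value theorem to show `star e (1-e) = 1-e`
    have hconte : ContinuousOn (fun z => star e z) (Icc (0:ℝ) 1) := by
      have : ContinuousOn (fun z : ℝ => ((e, z) : ℝ × ℝ)) (Icc (0:ℝ) 1) :=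
        (continuous_const.prodMk continuous_id).continuousOn
      exact hcont.comp this (fun z hz => ⟨hemem, hz⟩)
    have he00 : star e 0 = 0 :=
      le_antisymm (star_le_right hstar hemem zero_mem01) (hstar.mem e hemem 0 zero_mem01).1
    have he11 : star e 1 = e := hstar.one e hemem
    have hiv := intermediate_value_Icc (zero_le_one) hconte
    rw [he00, he11] at hiv
    obtain ⟨z, hz, hze⟩ := hiv (⟨by linarith, by linarith⟩ : (1 - e) ∈ Icc 0 e)
    have hze' : star e z = 1 - e := hze
    have : star e (1 - e) = 1 - e := by
      rw [← hze', ← hstar.assoc e hemem e hemem z hz, hee, hze']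
    linarith
end NoIdem
section Theta

variable {star : ℝ → ℝ → ℝ} (hstar : IsContinuousTNorm star)

include hstar

/-- A uniform defect: on `[C,1]` the map `s ↦ γ ∗ s` decreases `s` by at least `θ > 0`. -/
lemma exists_theta (htn1 : TN1 star) {γ C : ℝ} (hγ : γ ∈ Icc (0:ℝ) 1) (hγ1 : γ < 1)
    (hC0 : 0 < C) (hC1 : C ≤ 1) :
    ∃ θ : ℝ, 0 < θ ∧ ∀ s ∈ Icc C 1, star γ s ≤ s - θ := by
  have hsub : Icc C 1 ⊆ Icc (0:ℝ) 1 := Icc_subset_Icc (le_of_lt hC0) le_rfl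
  have hconte : ContinuousOn (fun s => s - star γ s) (Icc C 1) := by
    have h1 : ContinuousOn (fun s : ℝ => ((γ, s) : ℝ × ℝ)) (Icc C 1) :=
      (continuous_const.prodMk continuous_id).continuousOn
    have h2 : ContinuousOn (fun s => star γ s) (Icc C 1) :=
      hstar.continuous.comp h1 (fun s hs => ⟨hγ, hsub hs⟩)
    exact (continuousOn_id).sub h2
  obtain ⟨s0, hs0, hmin⟩ :=
    isCompact_Icc.exists_isMinOn (nonempty_Icc.mpr hC1) hconte
  refine ⟨s0 - star γ s0, ?_, ?_⟩
  · have := star_lt_of_tn1 hstar htn1 hγ hγ1 (hsub hs0) (lt_of_lt_of_le hC0 hs0.1)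
    linarith
  · intro s hs
    have := hmin hs
    simp only [Set.mem_setOf_eq] at this
    linarith [this]

/-- The corner values `star (1 - 1/(m+2)) (1 - 1/(m+2))` tend to `1`. -/
lemma corner_tendsto :
    Filter.Tendsto (fun m : ℕ => star (1 - 1/(m+2)) (1 - 1/(m+2))) Filter.atTop (nhds 1) := by
  have hmem : ∀ m : ℕ, (1 - 1/((m:ℝ)+2)) ∈ Icc (0:ℝ) 1 := by
    intro m
    have h2 : (0:ℝ) < (m:ℝ) + 2 := by positivity
    constructor
    · have : 1/((m:ℝ)+2) ≤ 1 := by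
        rw [div_le_one h2]; linarith
      linarith
    · have : 0 < 1/((m:ℝ)+2) := by positivity
      linarith
  have hten : Filter.Tendsto (fun m : ℕ => 1 - 1/((m:ℝ)+2)) Filter.atTop (nhds 1) := by
    have h0 : Filter.Tendsto (fun m : ℕ => 1/((m:ℝ)+2)) Filter.atTop (nhds 0) := by
      simp only [one_div]
      apply Filter.Tendsto.comp tendsto_inv_atTop_zero
      exact Filter.tendsto_atTop_add_const_right _ 2 tendsto_natCast_atTop_atTop
    have := (tendsto_const_nhds : Filter.Tendsto (fun _ : ℕ => (1:ℝ)) _ _).sub h0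
    simpa using this
  have hcw : ContinuousWithinAt (fun p : ℝ × ℝ => star p.1 p.2)
      ((Icc (0:ℝ) 1) ×ˢ (Icc (0:ℝ) 1)) (1, 1) := hstar.continuous _ ⟨one_mem01, one_mem01⟩
  have htp : Filter.Tendsto (fun m : ℕ => ((1 - 1/((m:ℝ)+2), 1 - 1/((m:ℝ)+2)) : ℝ × ℝ))
      Filter.atTop (nhdsWithin (1, 1) ((Icc (0:ℝ) 1) ×ˢ (Icc (0:ℝ) 1))) := by
    apply tendsto_nhdsWithin_of_tendsto_nhds_of_eventually_within
    · exact hten.prodMk_nhds hten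
    · exact Filter.Eventually.of_forall fun m => ⟨hmem m, hmem m⟩
  have := hcw.tendsto.comp htp
  rwa [show star 1 1 = 1 from hstar.one 1 one_mem01] at this

end Theta
section Pair

variable {star : ℝ → ℝ → ℝ}

lemma bddAbove_cross {X Y : Type*} (Mc : (X ⊕ Y) → (X ⊕ Y) → ℝ → ℝ) (t : ℝ)
    (hrange : ∀ p q, Mc p q t ∈ Icc (0:ℝ) 1) (x : X) :
    BddAbove (Set.range fun y : Y => Mc (Sum.inl x) (Sum.inr y) t) := by
  refine ⟨1, ?_⟩; rintro _ ⟨y, rfl⟩; exact (hrange _ _).2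

lemma bddAbove_cross' {X Y : Type*} (Mc : (X ⊕ Y) → (X ⊕ Y) → ℝ → ℝ) (t : ℝ)
    (hrange : ∀ p q, Mc p q t ∈ Icc (0:ℝ) 1) (y : Y) :
    BddAbove (Set.range fun x : X => Mc (Sum.inl x) (Sum.inr y) t) := by
  refine ⟨1, ?_⟩; rintro _ ⟨x, rfl⟩; exact (hrange _ _).2

lemma fuzzyH_le_one {X Y : Type*} [Nonempty X] [Nonempty Y]
    (Mc : (X ⊕ Y) → (X ⊕ Y) → ℝ → ℝ) (t : ℝ)
    (hrange : ∀ p q, Mc p q t ∈ Icc (0:ℝ) 1) : fuzzyH Mc t ≤ 1 := by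
  refine le_trans (min_le_left _ _) ?_
  have hbdd : BddBelow (Set.range fun x : X => ⨆ y : Y, Mc (.inl x) (.inr y) t) := by
    refine ⟨0, ?_⟩; rintro _ ⟨x, rfl⟩
    exact le_ciSup_of_le (bddAbove_cross Mc t hrange x) (Classical.arbitrary Y)
      (hrange _ _).1
  exact ciInf_le_of_le hbdd (Classical.arbitrary X) (ciSup_le fun y => (hrange _ _).2)

lemma mgh_bddAbove {X Y : Type*} [Nonempty X] [Nonempty Y]
    (MX : X → X → ℝ → ℝ) (MY : Y → Y → ℝ → ℝ) {t : ℝ} (ht : 0 < t) :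
    BddAbove ((fun M => fuzzyH M t) '' {M | IsAdmissible star MX MY M}) := by
  refine ⟨1, ?_⟩; rintro _ ⟨M', hM', rfl⟩
  exact fuzzyH_le_one M' t (fun p q => hM'.1.range p q t ht.le)

/-- The key construction: matched `δ`-nets with `γ`-comparable pairwise distances
give a lower bound `(1-δ) ∗ γ` on the Gromov-Hausdorff fuzzy distance. -/
lemma pair_MGH (hstar : IsContinuousTNorm star)
    {X Y : Type u} [Nonempty X] [Nonempty Y]
    (MX : X → X → ℝ → ℝ) (MY : Y → Y → ℝ → ℝ)
    (hMX : IsNAFuzzyMetric star MX) (hMY : IsNAFuzzyMetric star MY)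
    (hstX : ∀ x y : X, ∀ t : ℝ, 0 < t → MX x y t = MX x y 1)
    (hstY : ∀ x y : Y, ∀ t : ℝ, 0 < t → MY x y t = MY x y 1)
    {K : ℕ} (hK : 0 < K) (A : Fin K → X) (B : Fin K → Y)
    {δ γ : ℝ} (hδ0 : 0 < δ) (hδ1 : δ ≤ 1) (hγm : γ ∈ Icc (0:ℝ) 1) (hγ1 : γ < 1)
    (hA : ∀ x, ∃ i, 1 - δ < MX (A i) x 1)
    (hB : ∀ y, ∃ i, 1 - δ < MY (B i) y 1)
    (hP1 : ∀ i l, star γ (MY (B i) (B l) 1) ≤ MX (A i) (A l) 1)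
    (hP2 : ∀ i l, star γ (MX (A i) (A l) 1) ≤ MY (B i) (B l) 1)
    {t : ℝ} (ht : 0 < t) :
    star (1 - δ) γ ≤ MGH star MX MY t := by
  classical
  have hne : (Finset.univ : Finset (Fin K)).Nonempty := ⟨⟨0, hK⟩, Finset.mem_univ _⟩
  have mX : ∀ x x', MX x x' 1 ∈ Icc (0:ℝ) 1 := fun x x' => hMX.range x x' 1 zero_le_one
  have mY : ∀ y y', MY y y' 1 ∈ Icc (0:ℝ) 1 := fun y y' => hMY.range y y' 1 zero_le_one
  have mδ : (1 - δ) ∈ Icc (0:ℝ) 1 := ⟨by linarith, by linarith⟩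
  set D : X → Y → ℝ := fun x y =>
    Finset.univ.sup' hne (fun i => star (MX x (A i) 1) (star γ (MY (B i) y 1))) with hD
  have mγY : ∀ y y', star γ (MY y y' 1) ∈ Icc (0:ℝ) 1 :=
    fun y y' => hstar.mem _ hγm _ (mY y y')
  have mT : ∀ x y i, star (MX x (A i) 1) (star γ (MY (B i) y 1)) ∈ Icc (0:ℝ) 1 :=
    fun x y i => hstar.mem _ (mX x (A i)) _ (mγY (B i) y)
  have term_le_D : ∀ x y i, star (MX x (A i) 1) (star γ (MY (B i) y 1)) ≤ D x y := by
    intro x y i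
    simp only [hD]
    exact Finset.le_sup' (fun i => star (MX x (A i) 1) (star γ (MY (B i) y 1)))
      (Finset.mem_univ i)
  have D_mem : ∀ x y, D x y ∈ Icc (0:ℝ) 1 := by
    intro x y
    constructor
    · exact le_trans (mT x y ⟨0, hK⟩).1 (term_le_D x y ⟨0, hK⟩)
    · simp only [hD]
      exact Finset.sup'_le _ _ fun i _ => (mT x y i).2
  have D_le_γ : ∀ x y, D x y ≤ γ := by
    intro x y
    simp only [hD]
    refine Finset.sup'_le _ _ fun i _ => ?_
    exact le_trans (star_le_right hstar (mX x (A i)) (mγY (B i) y))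
      (star_le_left hstar hγm (mY (B i) y))
  have D_eq : ∀ x y, ∃ i, D x y = star (MX x (A i) 1) (star γ (MY (B i) y 1)) := by
    intro x y
    simp only [hD]
    obtain ⟨i, _, hi⟩ := Finset.exists_mem_eq_sup' hne
      (fun i => star (MX x (A i) 1) (star γ (MY (B i) y 1)))
    exact ⟨i, hi⟩
  -- the four triangle-type inequalities for `D`
  have D1 : ∀ x x' y, star (MX x x' 1) (D x' y) ≤ D x y := by
    intro x x' y
    obtain ⟨i, hi⟩ := D_eq x' y
    rw [hi]
    calc star (MX x x' 1) (star (MX x' (A i) 1) (star γ (MY (B i) y 1)))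
        = star (star (MX x x' 1) (MX x' (A i) 1)) (star γ (MY (B i) y 1)) :=
          (hstar.assoc _ (mX x x') _ (mX x' (A i)) _ (mγY (B i) y)).symm
      _ ≤ star (MX x (A i) 1) (star γ (MY (B i) y 1)) := by
          refine hstar.mono _ _ _ _ (hstar.mem _ (mX x x') _ (mX x' (A i))) (mγY (B i) y)
            (mX x (A i)) (mγY (B i) y) ?_ le_rfl
          simpa using hMX.na x x' (A i) 1 1 one_pos one_pos
      _ ≤ D x y := term_le_D x y i
  have D2 : ∀ x y y', star (D x y') (MY y' y 1) ≤ D x y := by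
    intro x y y'
    obtain ⟨i, hi⟩ := D_eq x y'
    rw [hi]
    calc star (star (MX x (A i) 1) (star γ (MY (B i) y' 1))) (MY y' y 1)
        = star (MX x (A i) 1) (star γ (star (MY (B i) y' 1) (MY y' y 1))) := by
          rw [hstar.assoc _ (mX x (A i)) _ (mγY (B i) y') _ (mY y' y),
            hstar.assoc γ hγm _ (mY (B i) y') _ (mY y' y)]
      _ ≤ star (MX x (A i) 1) (star γ (MY (B i) y 1)) := by
          refine hstar.mono _ _ _ _ (mX x (A i))
            (hstar.mem _ hγm _ (hstar.mem _ (mY (B i) y') _ (mY y' y)))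
            (mX x (A i)) (mγY (B i) y) le_rfl ?_
          refine hstar.mono _ _ _ _ hγm (hstar.mem _ (mY (B i) y') _ (mY y' y)) hγm
            (mY (B i) y) le_rfl ?_
          simpa using hMY.na (B i) y' y 1 1 one_pos one_pos
      _ ≤ D x y := term_le_D x y i
  have D3 : ∀ x z y, star (D x y) (D z y) ≤ MX x z 1 := by
    intro x z y
    obtain ⟨i, hi⟩ := D_eq x y
    obtain ⟨l, hl⟩ := D_eq z y
    rw [hi, hl]
    have huv : star (MY (B i) y 1) (MY (B l) y 1) ≤ MY (B i) (B l) 1 := by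
      rw [hMY.km3 (B l) y 1]
      simpa using hMY.na (B i) y (B l) 1 1 one_pos one_pos
    have hmid : star (star γ (MY (B i) y 1)) (star γ (MY (B l) y 1)) ≤ MX (A i) (A l) 1 := by
      calc star (star γ (MY (B i) y 1)) (star γ (MY (B l) y 1))
          = star (star γ γ) (star (MY (B i) y 1) (MY (B l) y 1)) :=
            star_rearr hstar hγm (mY (B i) y) hγm (mY (B l) y)
        _ = star γ (star γ (star (MY (B i) y 1) (MY (B l) y 1))) :=
            hstar.assoc γ hγm γ hγm _ (hstar.mem _ (mY (B i) y) _ (mY (B l) y))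
        _ ≤ star γ (MY (B i) (B l) 1) := by
            refine hstar.mono _ _ _ _ hγm
              (hstar.mem _ hγm _ (hstar.mem _ (mY (B i) y) _ (mY (B l) y)))
              hγm (mY (B i) (B l)) le_rfl ?_
            exact le_trans (star_le_right hstar hγm
              (hstar.mem _ (mY (B i) y) _ (mY (B l) y))) huv
        _ ≤ MX (A i) (A l) 1 := hP1 i l
    calc star (star (MX x (A i) 1) (star γ (MY (B i) y 1)))
          (star (MX z (A l) 1) (star γ (MY (B l) y 1)))
        = star (star (MX x (A i) 1) (MX z (A l) 1))
          (star (star γ (MY (B i) y 1)) (star γ (MY (B l) y 1))) :=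
          star_rearr hstar (mX x (A i)) (mγY (B i) y) (mX z (A l)) (mγY (B l) y)
      _ ≤ star (star (MX x (A i) 1) (MX z (A l) 1)) (MX (A i) (A l) 1) :=
          hstar.mono _ _ _ _ (hstar.mem _ (mX x (A i)) _ (mX z (A l)))
            (hstar.mem _ (mγY (B i) y) _ (mγY (B l) y))
            (hstar.mem _ (mX x (A i)) _ (mX z (A l))) (mX (A i) (A l)) le_rfl hmid
      _ = star (MX x (A i) 1) (star (MX (A i) (A l) 1) (MX (A l) z 1)) := by
          rw [hstar.assoc _ (mX x (A i)) _ (mX z (A l)) _ (mX (A i) (A l)),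
            hstar.comm _ (mX z (A l)) _ (mX (A i) (A l)), hMX.km3 z (A l) 1]
      _ ≤ star (MX x (A i) 1) (MX (A i) z 1) := by
          refine hstar.mono _ _ _ _ (mX x (A i))
            (hstar.mem _ (mX (A i) (A l)) _ (mX (A l) z)) (mX x (A i)) (mX (A i) z)
            le_rfl ?_
          simpa using hMX.na (A i) (A l) z 1 1 one_pos one_pos
      _ ≤ MX x z 1 := by simpa using hMX.na x (A i) z 1 1 one_pos one_pos
  have D4 : ∀ y y' x, star (D x y) (D x y') ≤ MY y y' 1 := by
    intro y y' x
    obtain ⟨i, hi⟩ := D_eq x y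
    obtain ⟨l, hl⟩ := D_eq x y'
    rw [hi, hl]
    have haa : star (MX x (A i) 1) (MX x (A l) 1) ≤ MX (A i) (A l) 1 := by
      rw [hMX.km3 x (A i) 1]
      simpa using hMX.na (A i) x (A l) 1 1 one_pos one_pos
    calc star (star (MX x (A i) 1) (star γ (MY (B i) y 1)))
          (star (MX x (A l) 1) (star γ (MY (B l) y' 1)))
        = star (star (MX x (A i) 1) (MX x (A l) 1))
          (star (star γ (MY (B i) y 1)) (star γ (MY (B l) y' 1))) :=
          star_rearr hstar (mX x (A i)) (mγY (B i) y) (mX x (A l)) (mγY (B l) y')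
      _ = star (star (MX x (A i) 1) (MX x (A l) 1))
          (star (star γ γ) (star (MY (B i) y 1) (MY (B l) y' 1))) := by
          rw [star_rearr hstar hγm (mY (B i) y) hγm (mY (B l) y')]
      _ = star (star (star (MX x (A i) 1) (MX x (A l) 1)) γ)
          (star γ (star (MY (B i) y 1) (MY (B l) y' 1))) := by
          rw [hstar.assoc γ hγm γ hγm _ (hstar.mem _ (mY (B i) y) _ (mY (B l) y')),
            hstar.assoc _ (hstar.mem _ (mX x (A i)) _ (mX x (A l))) γ hγm _
              (hstar.mem _ hγm _ (hstar.mem _ (mY (B i) y) _ (mY (B l) y')))]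
      _ ≤ star (MY (B i) (B l) 1) (star (MY (B i) y 1) (MY (B l) y' 1)) := by
          refine hstar.mono _ _ _ _
            (hstar.mem _ (hstar.mem _ (mX x (A i)) _ (mX x (A l))) _ hγm)
            (hstar.mem _ hγm _ (hstar.mem _ (mY (B i) y) _ (mY (B l) y')))
            (mY (B i) (B l)) (hstar.mem _ (mY (B i) y) _ (mY (B l) y')) ?_ ?_
          · rw [hstar.comm _ (hstar.mem _ (mX x (A i)) _ (mX x (A l))) γ hγm]
            exact le_trans (hstar.mono _ _ _ _ hγm
              (hstar.mem _ (mX x (A i)) _ (mX x (A l))) hγm (mX (A i) (A l)) le_rfl haa)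
              (hP2 i l)
          · exact star_le_right hstar hγm (hstar.mem _ (mY (B i) y) _ (mY (B l) y'))
      _ = star (star (MY (B i) (B l) 1) (MY (B i) y 1)) (MY (B l) y' 1) :=
          (hstar.assoc _ (mY (B i) (B l)) _ (mY (B i) y) _ (mY (B l) y')).symm
      _ ≤ star (MY y (B l) 1) (MY (B l) y' 1) := by
          refine hstar.mono _ _ _ _ (hstar.mem _ (mY (B i) (B l)) _ (mY (B i) y))
            (mY (B l) y') (mY y (B l)) (mY (B l) y') ?_ le_rfl
          rw [hstar.comm _ (mY (B i) (B l)) _ (mY (B i) y), hMY.km3 (B i) y 1]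
          simpa using hMY.na y (B i) (B l) 1 1 one_pos one_pos
      _ ≤ MY y y' 1 := by simpa using hMY.na y (B l) y' 1 1 one_pos one_pos
  -- the candidate admissible metric on the disjoint union
  set Mc : (X ⊕ Y) → (X ⊕ Y) → ℝ → ℝ := fun p q s =>
    Sum.elim
      (fun x => Sum.elim (fun x' => MX x x' s) (fun y => if 0 < s then D x y else 0) q)
      (fun y => Sum.elim (fun x => if 0 < s then D x y else 0) (fun y' => MY y y' s) q) p
    with hMc
  have Mll : ∀ x x' s, Mc (Sum.inl x) (Sum.inl x') s = MX x x' s := fun _ _ _ => rfl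
  have Mrr : ∀ y y' s, Mc (Sum.inr y) (Sum.inr y') s = MY y y' s := fun _ _ _ => rfl
  have Mlr : ∀ x y s, Mc (Sum.inl x) (Sum.inr y) s = if 0 < s then D x y else 0 :=
    fun _ _ _ => rfl
  have Mrl : ∀ y x s, Mc (Sum.inr y) (Sum.inl x) s = if 0 < s then D x y else 0 :=
    fun _ _ _ => rfl
  have cross_cont : ∀ (c : ℝ) (t0 : ℝ), 0 < t0 →
      ContinuousWithinAt (fun s => if 0 < s then c else 0) (Iio t0) t0 := by
    intro c t0 ht0
    have h1 : ∀ᶠ s in nhdsWithin t0 (Iio t0), (fun s => if 0 < s then c else 0) s =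
        (fun _ : ℝ => c) s := by
      have := eventually_gt_nhds ht0
      filter_upwards [this.filter_mono nhdsWithin_le_nhds] with s hs
      exact if_pos hs
    exact ContinuousWithinAt.congr_of_eventuallyEq continuousWithinAt_const h1 (if_pos ht0)
  have hNA : IsNAFuzzyMetric star Mc := by
    constructor
    · -- range
      rintro (x | y) (x' | y') s hs
      · exact hMX.range x x' s hs
      · rw [Mlr]; split_ifs; exacts [D_mem x y', ⟨le_rfl, zero_le_one⟩]
      · rw [Mrl]; split_ifs; exacts [D_mem x' y, ⟨le_rfl, zero_le_one⟩]
      · exact hMY.range y y' s hs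
    · -- km1
      rintro (x | y) (x' | y')
      · exact hMX.km1 x x'
      · rw [Mlr]; simp
      · rw [Mrl]; simp
      · exact hMY.km1 y y'
    · -- km2
      rintro (x | y) (x' | y')
      · simp only [Mll, Sum.inl.injEq]; exact hMX.km2 x x'
      · constructor
        · intro h
          exfalso
          have h1 := h 1 one_pos
          rw [Mlr, if_pos one_pos] at h1
          have := D_le_γ x y'
          rw [h1] at this; linarith
        · intro h; exact absurd h (by simp)
      · constructor
        · intro h
          exfalso
          have h1 := h 1 one_pos
          rw [Mrl, if_pos one_pos] at h1
          have := D_le_γ x' y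
          rw [h1] at this; linarith
        · intro h; exact absurd h (by simp)
      · simp only [Mrr, Sum.inr.injEq]; exact hMY.km2 y y'
    · -- km3
      rintro (x | y) (x' | y') s
      · exact hMX.km3 x x' s
      · rfl
      · rfl
      · exact hMY.km3 y y' s
    · -- na
      rintro (x | y) (x' | y') (x'' | y'') t' s' ht' hs'
      all_goals
        have hmax : 0 < max t' s' := lt_max_iff.mpr (Or.inl ht')
      · simp only [Mll]; exact hMX.na x x' x'' t' s' ht' hs'
      · simp only [Mll, Mlr, if_pos hs', if_pos hmax, hstX x x' t' ht']
        exact D1 x x' y''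
      · simp only [Mlr, Mrl, Mll, if_pos ht', if_pos hs']
        rw [hstX x x'' (max t' s') hmax]
        exact D3 x x'' y'
      · simp only [Mlr, Mrr, if_pos ht', if_pos hmax, hstY y' y'' s' hs']
        exact D2 x y'' y'
      · simp only [Mrl, Mll, if_pos ht', if_pos hmax, hstX x' x'' s' hs']
        rw [hstar.comm _ (D_mem x' y) _ (mX x' x''), hMX.km3 x' x'' 1]
        exact D1 x'' x' y
      · simp only [Mrl, Mlr, Mrr, if_pos ht', if_pos hs']
        rw [hstY y y'' (max t' s') hmax]
        exact D4 y y'' x'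
      · simp only [Mrr, Mrl, if_pos hs', if_pos hmax, hstY y y' t' ht']
        rw [hstar.comm _ (mY y y') _ (D_mem x'' y'), hMY.km3 y y' 1]
        exact D2 x'' y y'
      · simp only [Mrr]; exact hMY.na y y' y'' t' s' ht' hs'
    · -- km5
      rintro (x | y) (x' | y') t0 ht0
      · exact hMX.km5 x x' t0 ht0
      · exact cross_cont (D x y') t0 ht0
      · exact cross_cont (D x' y) t0 ht0
      · exact hMY.km5 y y' t0 ht0
  have hAdm : IsAdmissible star MX MY Mc :=
    ⟨hNA, fun x x' s _ => rfl, fun y y' s _ => rfl⟩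
  -- lower bound for the Hausdorff distance of the construction
  have hrange : ∀ p q, Mc p q t ∈ Icc (0:ℝ) 1 := fun p q => hNA.range p q t ht.le
  have hgoal1 : ∀ x : X, ∃ y : Y, star (1 - δ) γ ≤ Mc (Sum.inl x) (Sum.inr y) t := by
    intro x
    obtain ⟨i, hi⟩ := hA x
    refine ⟨B i, ?_⟩
    rw [Mlr, if_pos ht]
    have h1 : MY (B i) (B i) 1 = 1 := (hMY.km2 (B i) (B i)).mpr rfl 1 one_pos
    have h2 : star (MX x (A i) 1) (star γ (MY (B i) (B i) 1)) = star (MX x (A i) 1) γ := by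
      rw [h1, hstar.one γ hγm]
    have h3 : star (1 - δ) γ ≤ star (MX x (A i) 1) γ := by
      refine hstar.mono _ _ _ _ mδ hγm (mX x (A i)) hγm ?_ le_rfl
      rw [hMX.km3 x (A i) 1]; linarith
    calc star (1 - δ) γ ≤ star (MX x (A i) 1) γ := h3
      _ = star (MX x (A i) 1) (star γ (MY (B i) (B i) 1)) := h2.symm
      _ ≤ D x (B i) := term_le_D x (B i) i
  have hgoal2 : ∀ y : Y, ∃ x : X, star (1 - δ) γ ≤ Mc (Sum.inl x) (Sum.inr y) t := by
    intro y
    obtain ⟨i, hi⟩ := hB y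
    refine ⟨A i, ?_⟩
    rw [Mlr, if_pos ht]
    have h1 : MX (A i) (A i) 1 = 1 := (hMX.km2 (A i) (A i)).mpr rfl 1 one_pos
    have h2 : star (MX (A i) (A i) 1) (star γ (MY (B i) y 1)) = star γ (MY (B i) y 1) := by
      rw [h1, star_one_left hstar (mγY (B i) y)]
    have h3 : star (1 - δ) γ ≤ star γ (MY (B i) y 1) := by
      rw [hstar.comm _ mδ _ hγm]
      exact hstar.mono _ _ _ _ hγm mδ hγm (mY (B i) y) le_rfl (by linarith)
    calc star (1 - δ) γ ≤ star γ (MY (B i) y 1) := h3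
      _ = star (MX (A i) (A i) 1) (star γ (MY (B i) y 1)) := h2.symm
      _ ≤ D (A i) y := term_le_D (A i) y i
  have hfH : star (1 - δ) γ ≤ fuzzyH Mc t := by
    refine le_min ?_ ?_
    · refine le_ciInf fun x => ?_
      obtain ⟨y, hy⟩ := hgoal1 x
      exact le_ciSup_of_le (bddAbove_cross Mc t hrange x) y hy
    · refine le_ciInf fun y => ?_
      obtain ⟨x, hx⟩ := hgoal2 y
      exact le_ciSup_of_le (bddAbove_cross' Mc t hrange y) x hx
  refine le_trans hfH (le_csSup (mgh_bddAbove MX MY ht) ?_)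
  exact ⟨Mc, hAdm, rfl⟩


end Pair
section Key

open Filter

lemma key_subseq (star : ℝ → ℝ → ℝ) (hstar : IsContinuousTNorm star)
    (X : ℕ → Type u) [∀ n, Nonempty (X n)]
    (M : ∀ n, X n → X n → ℝ → ℝ)
    (hM : ∀ n, IsNAFuzzyMetric star (M n))
    (htn1 : TN1 star)
    (hstat : ∀ n, ∀ x y : X n, ∀ t s : ℝ, 0 < t → 0 < s → M n x y t = M n x y s)
    (C : ℝ) (hC0 : 0 < C) (hC : ∀ n, C ≤ fuzzyDiam (M n) 1)
    (N : ℝ → ℕ) (hcov : ∀ ε : ℝ, 0 < ε → ε < 1 → ∀ n, CovLE (M n) ε 1 (N ε))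
    (ψ : ℕ → ℕ) (hψ : StrictMono ψ) (ε : ℝ) (hε0 : 0 < ε) (hε1 : ε < 1) :
    ∃ φ : ℕ → ℕ, StrictMono φ ∧ ∀ j k, ∀ t : ℝ, 0 < t →
      star (1 - ε) (1 - ε) < MGH star (M (ψ (φ j))) (M (ψ (φ k))) t := by
  classical
  -- all distance values lie in `[C, 1]`
  have hval : ∀ n (x y : X n), M n x y 1 ∈ Icc C 1 := by
    intro n x y
    refine ⟨le_trans (hC n) ?_, (hM n |>.range x y 1 zero_le_one).2⟩
    have hbdd : BddBelow (Set.range fun p : X n × X n => M n p.1 p.2 1) := by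
      refine ⟨0, ?_⟩; rintro _ ⟨p, rfl⟩; exact (hM n |>.range p.1 p.2 1 zero_le_one).1
    exact ciInf_le hbdd (x, y)
  have hC1 : C ≤ 1 := by
    obtain x0 : X 0 := Classical.arbitrary (X 0)
    have h1 : M 0 x0 x0 1 = 1 := ((hM 0).km2 x0 x0).mpr rfl 1 one_pos
    have := hval 0 x0 x0
    rw [h1] at this; exact this.1
  -- choose the corner parameter
  obtain ⟨m0, hm0⟩ : ∃ m0 : ℕ, 1 - ε < star (1 - 1/((m0:ℝ)+2)) (1 - 1/((m0:ℝ)+2)) := by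
    have := (corner_tendsto hstar).eventually (eventually_gt_nhds (by linarith : 1 - ε < 1))
    exact this.exists
  set η : ℝ := 1/((m0:ℝ)+2) with hη
  have hm02 : (0:ℝ) < (m0:ℝ) + 2 := by positivity
  have hη0 : 0 < η := by positivity
  have hη1 : η ≤ 1/2 := by
    rw [hη]
    rw [div_le_div_iff₀ hm02 (by norm_num)]
    have : (0:ℝ) ≤ (m0:ℝ) := Nat.cast_nonneg m0
    linarith
  set γ : ℝ := 1 - η with hγ
  have hγm : γ ∈ Icc (0:ℝ) 1 := ⟨by rw [hγ]; linarith, by rw [hγ]; linarith⟩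
  have hγ1 : γ < 1 := by rw [hγ]; linarith
  obtain ⟨θ, hθ0, hθ⟩ := exists_theta hstar htn1 hγm hγ1 hC0 hC1
  -- `δ`-nets of uniformly bounded size
  set K : ℕ := N η + 1 with hK
  have hKpos : 0 < K := Nat.succ_pos _
  have hnet : ∀ n, ∃ A : Fin K → X n, ∀ x, ∃ i, 1 - η < M n (A i) x 1 := by
    intro n
    obtain ⟨Cs, hcard, hcover⟩ := hcov η hη0 (by linarith) n
    set L := Cs.toList with hL
    refine ⟨fun i => if h : (i : ℕ) < L.length then L.get ⟨i, h⟩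
      else Classical.arbitrary (X n), ?_⟩
    intro x
    obtain ⟨c, hc, hlt⟩ := hcover x
    have hcL : c ∈ L := by rw [hL]; exact Finset.mem_toList.mpr hc
    have hj : L.idxOf c < L.length := List.idxOf_lt_length_iff.mpr hcL
    have hjK : L.idxOf c < K := by
      have : L.length = Cs.card := Finset.length_toList Cs
      omega
    refine ⟨⟨L.idxOf c, hjK⟩, ?_⟩
    show 1 - η < M n (if h : L.idxOf c < L.length then L.get ⟨L.idxOf c, h⟩
        else Classical.arbitrary (X n)) x 1
    rw [dif_pos hj, List.idxOf_get hj]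
    exact hlt
  choose Anet hAnet using hnet
  -- matrices of pairwise distances between the net points
  set V : ℕ → (Fin K × Fin K) → ℝ :=
    fun n p => M (ψ n) (Anet (ψ n) p.1) (Anet (ψ n) p.2) 1 with hV
  have hVS : ∀ n, V n ∈ Set.univ.pi fun _ : Fin K × Fin K => Icc C 1 := by
    intro n
    rw [Set.mem_univ_pi]
    intro p
    exact hval (ψ n) _ _
  obtain ⟨ρ, hρS, φ1, hφ1, hconv⟩ :=
    (isCompact_univ_pi fun _ : Fin K × Fin K => isCompact_Icc).tendsto_subseq hVS
  have hcoord : ∀ p, Tendsto (fun n => V (φ1 n) p) atTop (nhds (ρ p)) := by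
    intro p
    exact (tendsto_pi_nhds.mp hconv) p
  have hev : ∀ᶠ n in atTop, ∀ p, |V (φ1 n) p - ρ p| < θ/2 := by
    rw [eventually_all]
    intro p
    have := (hcoord p).eventually (eventually_abs_sub_lt (ρ p) (half_pos hθ0))
    exact this
  obtain ⟨n0, hn0⟩ := eventually_atTop.mp hev
  refine ⟨fun n => φ1 (n + n0), hφ1.comp fun a b h => by omega, ?_⟩
  intro j k t ht
  set n := ψ (φ1 (j + n0)) with hn
  set m := ψ (φ1 (k + n0)) with hm
  have hclose : ∀ p, |V (φ1 (j + n0)) p - V (φ1 (k + n0)) p| < θ := by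
    intro p
    have h1 := hn0 (j + n0) (by omega) p
    have h2 := hn0 (k + n0) (by omega) p
    calc |V (φ1 (j + n0)) p - V (φ1 (k + n0)) p|
        ≤ |V (φ1 (j + n0)) p - ρ p| + |ρ p - V (φ1 (k + n0)) p| := abs_sub_le _ _ _
      _ < θ/2 + θ/2 := by rw [abs_sub_comm] at h2; exact add_lt_add h1 h2
      _ = θ := by ring
  have hP1 : ∀ i l : Fin K,
      star γ (M m (Anet m i) (Anet m l) 1) ≤ M n (Anet n i) (Anet n l) 1 := by
    intro i l
    have h1 : star γ (M m (Anet m i) (Anet m l) 1) ≤ M m (Anet m i) (Anet m l) 1 - θ :=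
      hθ _ (hval m _ _)
    have h2 := hclose (i, l)
    have h3 : V (φ1 (j + n0)) (i, l) = M n (Anet n i) (Anet n l) 1 := rfl
    have h4 : V (φ1 (k + n0)) (i, l) = M m (Anet m i) (Anet m l) 1 := rfl
    rw [h3, h4] at h2
    have := abs_lt.mp h2
    linarith [this.1, this.2]
  have hP2 : ∀ i l : Fin K,
      star γ (M n (Anet n i) (Anet n l) 1) ≤ M m (Anet m i) (Anet m l) 1 := by
    intro i l
    have h1 : star γ (M n (Anet n i) (Anet n l) 1) ≤ M n (Anet n i) (Anet n l) 1 - θ :=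
      hθ _ (hval n _ _)
    have h2 := hclose (i, l)
    have h3 : V (φ1 (j + n0)) (i, l) = M n (Anet n i) (Anet n l) 1 := rfl
    have h4 : V (φ1 (k + n0)) (i, l) = M m (Anet m i) (Anet m l) 1 := rfl
    rw [h3, h4] at h2
    have := abs_lt.mp h2
    linarith [this.1, this.2]
  have hpair := pair_MGH hstar (M n) (M m) (hM n) (hM m)
    (fun x y t' ht' => hstat n x y t' 1 ht' one_pos)
    (fun x y t' ht' => hstat m x y t' 1 ht' one_pos)
    hKpos (Anet n) (Anet m) hη0 (by linarith) hγm hγ1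
    (hAnet n) (hAnet m) hP1 hP2 ht
  have hfinal : star (1 - ε) (1 - ε) ≤ 1 - ε :=
    star_le_left hstar ⟨by linarith, by linarith⟩ ⟨by linarith, by linarith⟩
  calc star (1 - ε) (1 - ε) ≤ 1 - ε := hfinal
    _ < star (1 - η) (1 - η) := hm0
    _ = star (1 - η) γ := by rw [hγ]
    _ ≤ MGH star (M n) (M m) t := hpair

end Key

/-- Theorem `th:mainStat`: for stationary fuzzy metrics with a t-norm
satisfying (TN1), a uniform positive lower bound on the diameters and a uniform bound
on the cover numbers give, for every `0 < ε < 1`, a subsequence pairwise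
`(1-ε) ∗ (1-ε)`-close in `M_GH`; consequently a Cauchy subsequence exists. -/
theorem fuzzy_precompactness_stationary (star : ℝ → ℝ → ℝ) (hstar : IsContinuousTNorm star)
    (X : ℕ → Type u) [∀ n, TopologicalSpace (X n)] [∀ n, CompactSpace (X n)]
    [∀ n, Nonempty (X n)]
    (M : ∀ n, X n → X n → ℝ → ℝ)
    (hM : ∀ n, IsNAFuzzyMetric star (M n)) (hcomp : ∀ n, FuzzyCompatible (M n))
    -- (1) (TN1) and stationarity
    (htn1 : TN1 star)
    (hstat : ∀ n, ∀ x y : X n, ∀ t s : ℝ, 0 < t → 0 < s → M n x y t = M n x y s)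
    -- (2) a uniform positive lower bound for the diameters
    (C : ℝ) (hC0 : 0 < C) (hC : ∀ n, C ≤ fuzzyDiam (M n) 1)
    -- (3) a uniform bound on the cover numbers
    (N : ℝ → ℕ)
    (hcov : ∀ ε : ℝ, 0 < ε → ε < 1 → ∀ n, CovLE (M n) ε 1 (N ε)) :
    (∀ ε : ℝ, 0 < ε → ε < 1 →
      ∃ φ : ℕ → ℕ, StrictMono φ ∧
        ∀ j k, ∀ t : ℝ, 0 < t →
          star (1 - ε) (1 - ε) < MGH star (M (φ j)) (M (φ k)) t) ∧
    (∃ φ : ℕ → ℕ, StrictMono φ ∧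
      ∀ t ε : ℝ, 0 < t → 0 < ε → ε < 1 →
        ∃ k0 : ℕ, ∀ j k, k0 ≤ j → k0 ≤ k →
          1 - ε < MGH star (M (φ j)) (M (φ k)) t) := by
  classical
  constructor
  · intro ε hε0 hε1
    obtain ⟨φ, hφ, hspec⟩ := key_subseq star hstar X M hM htn1 hstat C hC0 hC N hcov
      id strictMono_id ε hε0 hε1
    exact ⟨φ, hφ, hspec⟩
  · -- the diagonal argument
    set E : ℕ → ℝ := fun m => 1/((m:ℝ)+2) with hE
    have hE0 : ∀ m, 0 < E m := by
      intro m; rw [hE]; positivity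
    have hE1 : ∀ m, E m < 1 := by
      intro m
      have h2 : (0:ℝ) < (m:ℝ) + 2 := by positivity
      have : 1/((m:ℝ)+2) ≤ 1/2 := by
        rw [div_le_div_iff₀ h2 (by norm_num)]
        have : (0:ℝ) ≤ (m:ℝ) := Nat.cast_nonneg m
        linarith
      calc E m ≤ 1/2 := this
        _ < 1 := by norm_num
    have step : ∀ (m : ℕ) (f : ℕ → ℕ), StrictMono f → ∃ g : ℕ → ℕ, StrictMono g ∧
        (∃ h : ℕ → ℕ, StrictMono h ∧ g = f ∘ h) ∧
        ∀ a b, ∀ t : ℝ, 0 < t →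
          star (1 - E m) (1 - E m) < MGH star (M (g a)) (M (g b)) t := by
      intro m f hf
      obtain ⟨φ, hφ, hs⟩ := key_subseq star hstar X M hM htn1 hstat C hC0 hC N hcov
        f hf (E m) (hE0 m) (hE1 m)
      exact ⟨f ∘ φ, hf.comp hφ, ⟨φ, hφ, rfl⟩, fun a b t ht => hs a b t ht⟩
    choose stepg hstep using step
    let G : ℕ → {f : ℕ → ℕ // StrictMono f} :=
      fun m => Nat.rec
        (⟨stepg 0 id strictMono_id, (hstep 0 id strictMono_id).1⟩ : {f : ℕ → ℕ // StrictMono f})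
        (fun m p => ⟨stepg (m+1) p.1 p.2, (hstep (m+1) p.1 p.2).1⟩) m
    have hGspec : ∀ m, ∀ a b, ∀ t : ℝ, 0 < t →
        star (1 - E m) (1 - E m) < MGH star (M ((G m).1 a)) (M ((G m).1 b)) t := by
      intro m
      cases m with
      | zero => exact (hstep 0 id strictMono_id).2.2
      | succ m => exact (hstep (m+1) (G m).1 (G m).2).2.2
    have hGnest : ∀ m, ∃ h : ℕ → ℕ, StrictMono h ∧ (G (m+1)).1 = (G m).1 ∘ h := by
      intro m
      exact (hstep (m+1) (G m).1 (G m).2).2.1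
    have hchain : ∀ m k, ∃ h : ℕ → ℕ, StrictMono h ∧ (G (m+k)).1 = (G m).1 ∘ h := by
      intro m k
      induction k with
      | zero => exact ⟨id, strictMono_id, rfl⟩
      | succ k ih =>
        obtain ⟨h, hh, heq⟩ := ih
        obtain ⟨h', hh', heq'⟩ := hGnest (m+k)
        refine ⟨h ∘ h', hh.comp hh', ?_⟩
        show (G (m+k+1)).1 = (G m).1 ∘ (h ∘ h')
        rw [heq', heq]
        rfl
    refine ⟨fun j => (G j).1 j, ?_, ?_⟩
    · refine strictMono_nat_of_lt_succ fun j => ?_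
      obtain ⟨h, hh, heq⟩ := hGnest j
      show (G j).1 j < (G (j+1)).1 (j+1)
      rw [heq]
      have h1 : j + 1 ≤ h (j+1) := (hh.le_apply)
      calc (G j).1 j < (G j).1 (j+1) := (G j).2 (Nat.lt_succ_self j)
        _ ≤ (G j).1 (h (j+1)) := (G j).2.monotone h1
        _ = ((G j).1 ∘ h) (j+1) := rfl
    · intro t ε ht hε0 hε1
      obtain ⟨m1, hm1⟩ : ∃ m1 : ℕ, 1 - ε < star (1 - 1/((m1:ℝ)+2)) (1 - 1/((m1:ℝ)+2)) :=
        ((corner_tendsto hstar).eventually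
          (eventually_gt_nhds (by linarith : 1 - ε < 1))).exists
      refine ⟨m1, ?_⟩
      intro j k hj hk
      have hrep : ∀ i, m1 ≤ i → ∃ a, (G i).1 i = (G m1).1 a := by
        intro i hi
        obtain ⟨h, _, heq⟩ := hchain m1 (i - m1)
        have hi' : m1 + (i - m1) = i := by omega
        rw [hi'] at heq
        exact ⟨h i, by rw [heq]; rfl⟩
      obtain ⟨a, ha⟩ := hrep j hj
      obtain ⟨b, hb⟩ := hrep k hk
      show 1 - ε < MGH star (M ((G j).1 j)) (M ((G k).1 k)) t
      rw [ha, hb]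
      calc 1 - ε < star (1 - E m1) (1 - E m1) := hm1
        _ < MGH star (M ((G m1).1 a)) (M ((G m1).1 b)) t := hGspec m1 a b t ht
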